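/- arXiv:2008.04962 — 2 statements merged into one kernel-verified Lean document; each statement's English description precedes it below -/
import Mathlib

section
/- Fix constants k₀ ≥ 4 and C₀ ≥ 1000. For each B̲ > 0 there exists B̄ > 0, depending only on B̲, such that the following holds. Let E ⊂ ℝ² be finite, let f : E → [0,∞), let M ≥ 0, let Q ∈ Λ^♯, and let x_Q^♯ ∈ Q be a point with dist(x_Q^♯, E) ≥ c₀δ_Q. Suppose Γ₊^♯(x_Q^♯, 4k₀, M) ≠ ∅. Then at least one of the following holds: (A) f(x) ≥ B̲Mδ_Q² for all x ∈ E ∩ 2Q; or (B) f(x) ≤ B̄Mδ_Q² for all x ∈ E ∩ 2Q. -/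
open Set Real Pointwise

noncomputable section

abbrev E2 := EuclideanSpace ℝ (Fin 2)

/-- Partial derivative in coordinate direction `i`. -/
noncomputable def pd (i : Fin 2) (F : E2 → ℝ) : E2 → ℝ :=
  fun x => fderiv ℝ F x (EuclideanSpace.single i 1)

/-- Iterated partial derivative `∂^α` for a multi-index `α = (α₁, α₂)`. -/
noncomputable def Dmul (α : ℕ × ℕ) (F : E2 → ℝ) : E2 → ℝ :=
  (pd 0)^[α.1] ((pd 1)^[α.2] F)

/-- The multi-indices `α` with `|α| ≤ 2`. -/
def multiIdx2 : Finset (ℕ × ℕ) :=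
  (Finset.range 3 ×ˢ Finset.range 3).filter (fun α => α.1 + α.2 ≤ 2)

/-- `(Σ_{|α| ≤ 2} |∂^α F (x)|²)^{1/2}`. -/
noncomputable def C2sum (F : E2 → ℝ) (x : E2) : ℝ :=
  Real.sqrt (∑ α ∈ multiIdx2, (Dmul α F x) ^ 2)

/-- `‖F‖_{C²(ℝ²)} ≤ M`. -/
def C2NormLE (F : E2 → ℝ) (M : ℝ) : Prop := ∀ x, C2sum F x ≤ M

/-- `f ∈ C²₊(E)`: `f` is the restriction to `E` of a nonnegative `C²` function of finite norm. -/
def MemC2plusTrace (E : Set E2) (f : E2 → ℝ) : Prop :=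
  ∃ F : E2 → ℝ, ContDiff ℝ 2 F ∧ (∀ x, 0 ≤ F x) ∧ (∀ x ∈ E, F x = f x) ∧ ∃ M, C2NormLE F M

/-- The trace norm `‖f‖_{C²₊(E)}`. -/
noncomputable def traceNormPlus (E : Set E2) (f : E2 → ℝ) : ℝ :=
  sInf { M | ∃ F : E2 → ℝ, ContDiff ℝ 2 F ∧ (∀ x, 0 ≤ F x) ∧ (∀ x ∈ E, F x = f x) ∧
    C2NormLE F M }

/-- The one-jet `𝒥_x F`, as an affine function on `ℝ²`. -/
noncomputable def jet (F : E2 → ℝ) (x : E2) : E2 → ℝ :=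
  fun y => F x + fderiv ℝ F x (y - x)

/-- The (half-open) square with center `c` and sidelength `δ`. -/
def sqC (c : E2) (δ : ℝ) : Set E2 :=
  {x | ∀ i : Fin 2, c i - δ / 2 ≤ x i ∧ x i < c i + δ / 2}

/-- `σ(x, S)`. -/
def sigmaSet (x : E2) (S : Set E2) : Set (E2 → ℝ) :=
  { P | ∃ φ : E2 → ℝ, ContDiff ℝ 2 φ ∧ (∀ z ∈ S, φ z = 0) ∧ C2NormLE φ 1 ∧ P = jet φ x }

/-- `σ^♯(x, k)`. -/
def sigmaSharp (E : Set E2) (x : E2) (k : ℕ) : Set (E2 → ℝ) :=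
  { P | ∀ S : Set E2, S ⊆ E → S.ncard ≤ k → P ∈ sigmaSet x S }

/-- `Γ₊(x, S, M)` (for the data `f`). -/
def GammaPlus (f : E2 → ℝ) (x : E2) (S : Set E2) (M : ℝ) : Set (E2 → ℝ) :=
  { P | ∃ F : E2 → ℝ, ContDiff ℝ 2 F ∧ (∀ y, 0 ≤ F y) ∧ (∀ z ∈ S, F z = f z) ∧
      C2NormLE F M ∧ P = jet F x }

/-- `Γ₊^♯(x, k, M)` (for `f` given on `E`). -/
def GammaSharp (E : Set E2) (f : E2 → ℝ) (x : E2) (k : ℕ) (M : ℝ) : Set (E2 → ℝ) :=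
  { P | ∀ S : Set E2, S ⊆ E → S.ncard ≤ k → P ∈ GammaPlus f x S M }

/-- `ℬ(x, δ) = {P : |∂^α P(x)| ≤ δ^{2-|α|} for |α| ≤ 1}`. -/
def jetBall (x : E2) (δ : ℝ) : Set (E2 → ℝ) :=
  { P | |P x| ≤ δ ^ 2 ∧ ∀ i : Fin 2, |fderiv ℝ P x (EuclideanSpace.single i 1)| ≤ δ }

/-- `|P|_{ℛ_x}`. -/
noncomputable def jetNormAt (x : E2) (P : E2 → ℝ) : ℝ :=
  Real.sqrt ((P x) ^ 2 + ‖fderiv ℝ P x‖ ^ 2)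

/-- diameter of a set of jets with respect to `|·|_{ℛ_x}`. -/
noncomputable def jetDiam (x : E2) (A : Set (E2 → ℝ)) : ℝ :=
  sSup { r | ∃ P ∈ A, ∃ P' ∈ A, r = jetNormAt x (P - P') }

noncomputable def vec2 (a b : ℝ) : E2 := (WithLp.equiv 2 (Fin 2 → ℝ)).symm ![a, b]

/-- A dyadic square is encoded by a triple `q = (i, j, k)`,
corresponding to `[2^k i, 2^k (i+1)) × [2^k j, 2^k (j+1))`; its sidelength is `2^k`. -/
noncomputable def dyadicLen (q : ℤ × ℤ × ℤ) : ℝ := (2 : ℝ) ^ q.2.2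

noncomputable def dyadicCenter (q : ℤ × ℤ × ℤ) : E2 :=
  vec2 ((2 : ℝ) ^ q.2.2 * ((q.1 : ℝ) + 1 / 2)) ((2 : ℝ) ^ q.2.2 * ((q.2.1 : ℝ) + 1 / 2))

noncomputable def dyadicSq (q : ℤ × ℤ × ℤ) : Set E2 := sqC (dyadicCenter q) (dyadicLen q)

/-- The concentric dilate `λQ` of the dyadic square `q`. -/
noncomputable def dilate (q : ℤ × ℤ × ℤ) (lam : ℝ) : Set E2 :=
  sqC (dyadicCenter q) (lam * dyadicLen q)

/-- The dyadic parent `Q⁺`. -/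
def dyadicParent (q : ℤ × ℤ × ℤ) : ℤ × ℤ × ℤ := (Int.fdiv q.1 2, Int.fdiv q.2.1 2, q.2.2 + 1)

/-- Membership in the Calderón–Zygmund collection `Λ₀`. -/
def memLambda0 (E : Set E2) (k₀ : ℕ) (C₀ : ℝ) (q : ℤ × ℤ × ℤ) : Prop :=
  dyadicLen q ≤ 1 ∧
  (∀ x ∈ dilate q 2, C₀ * dyadicLen q ≤ jetDiam x (sigmaSharp E x k₀)) ∧
  (∃ y ∈ dilate (dyadicParent q) 2, jetDiam y (sigmaSharp E y k₀) < 2 * C₀ * dyadicLen q)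

def Lambda0 (E : Set E2) (k₀ : ℕ) (C₀ : ℝ) : Set (ℤ × ℤ × ℤ) := { q | memLambda0 E k₀ C₀ q }

def LambdaSharp (E : Set E2) (k₀ : ℕ) (C₀ : ℝ) : Set (ℤ × ℤ × ℤ) :=
  { q | q ∈ Lambda0 E k₀ C₀ ∧ (E ∩ dilate q 2).Nonempty }


lemma vec_decomp (v : E2) :
    v = v 0 • (EuclideanSpace.single (0:Fin 2) (1:ℝ)) + v 1 • (EuclideanSpace.single (1:Fin 2) (1:ℝ)) := by
  ext i
  fin_cases i <;> simp [EuclideanSpace.single_apply]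

lemma Dmul20 (F : E2 → ℝ) : Dmul (2,0) F = pd 0 (pd 0 F) := rfl
lemma Dmul02 (F : E2 → ℝ) : Dmul (0,2) F = pd 1 (pd 1 F) := rfl
lemma Dmul11 (F : E2 → ℝ) : Dmul (1,1) F = pd 0 (pd 1 F) := rfl

lemma Dmul_le {F : E2 → ℝ} {M : ℝ} (hnorm : C2NormLE F M) {α : ℕ × ℕ}
    (hα : α ∈ multiIdx2) (y : E2) : |Dmul α F y| ≤ M := by
  have h1 : (Dmul α F y)^2 ≤ ∑ β ∈ multiIdx2, (Dmul β F y)^2 :=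
    Finset.single_le_sum (f := fun β => (Dmul β F y)^2) (fun β _ => sq_nonneg _) hα
  calc |Dmul α F y| = Real.sqrt ((Dmul α F y)^2) := (Real.sqrt_sq_eq_abs _).symm
    _ ≤ Real.sqrt (∑ β ∈ multiIdx2, (Dmul β F y)^2) := Real.sqrt_le_sqrt h1
    _ ≤ M := hnorm y

lemma pd_pd {F : E2 → ℝ} (hF : ContDiff ℝ 2 F) (i j : Fin 2) (y : E2) :
    pd i (pd j F) y
      = fderiv ℝ (fderiv ℝ F) y (EuclideanSpace.single i 1) (EuclideanSpace.single j 1) := by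
  have hΦ : ContDiff ℝ 1 (fderiv ℝ F) := hF.fderiv_right (le_refl 2)
  have hd : DifferentiableAt ℝ (fderiv ℝ F) y := (hΦ.differentiable one_ne_zero) y
  have h : fderiv ℝ (fun x => fderiv ℝ F x (EuclideanSpace.single j 1)) y
      = (fderiv ℝ (fderiv ℝ F) y).flip (EuclideanSpace.single j 1) := by
    rw [fderiv_clm_apply hd (differentiableAt_const _)]
    simp
  have hpdj : pd j F = fun x => fderiv ℝ F x (EuclideanSpace.single j 1) := rfl
  show fderiv ℝ (pd j F) y (EuclideanSpace.single i 1) = _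
  rw [hpdj, h, ContinuousLinearMap.flip_apply]

lemma mvt_abs {g g' : ℝ → ℝ} (hg : ∀ s, HasDerivAt g (g' s) s) {C t : ℝ}
    (hC : ∀ s ∈ Set.uIcc (0:ℝ) t, |g' s| ≤ C) :
    |g t - g 0| ≤ C * |t| := by
  have h := Convex.norm_image_sub_le_of_norm_hasDerivWithin_le
    (f := g) (f' := g') (s := Set.uIcc (0:ℝ) t)
    (fun x _ => (hg x).hasDerivWithinAt) (fun x hx => by simpa using hC x hx)
    (convex_uIcc _ _) Set.left_mem_uIcc Set.right_mem_uIcc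
  simpa [Real.norm_eq_abs] using h

lemma taylor_abs {g g' g'' : ℝ → ℝ} (hg : ∀ s, HasDerivAt g (g' s) s)
    (hg' : ∀ s, HasDerivAt g' (g'' s) s) {K : ℝ} (hK : ∀ s, |g'' s| ≤ K) (t : ℝ) :
    |g t - g 0 - t * g' 0| ≤ K * t ^ 2 := by
  have hKnn : 0 ≤ K := le_trans (abs_nonneg _) (hK 0)
  have hlin : ∀ s, HasDerivAt (fun s => g s - s * g' 0) (g' s - g' 0) s := fun s =>
    (hg s).sub (by simpa using (hasDerivAt_id s).mul_const (g' 0))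
  have h1 : ∀ s ∈ Set.uIcc (0:ℝ) t, |g' s - g' 0| ≤ K * |t| := by
    intro s hs
    have hb : |s| ≤ |t| := by
      rcases Set.mem_uIcc.1 hs with ⟨ha, hb⟩ | ⟨ha, hb⟩
      · rw [abs_of_nonneg ha]; exact le_trans hb (le_abs_self t)
      · rw [abs_of_nonpos hb]; exact le_trans (neg_le_neg ha) (neg_le_abs t)
    calc |g' s - g' 0| ≤ K * |s| := mvt_abs hg' (fun r _ => hK r)
      _ ≤ K * |t| := by nlinarith
  have h2 := mvt_abs hlin h1
  have h3 : (g t - t * g' 0) - (g 0 - 0 * g' 0) = g t - g 0 - t * g' 0 := by ring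
  calc |g t - g 0 - t * g' 0|
      = |(g t - t * g' 0) - (g 0 - 0 * g' 0)| := by rw [h3]
    _ ≤ (K * |t|) * |t| := h2
    _ = K * t ^ 2 := by rw [mul_assoc, abs_mul_abs_self]; ring

lemma key_bound {F : E2 → ℝ} (hF : ContDiff ℝ 2 F) {M : ℝ} (hM : 0 ≤ M)
    (hnorm : C2NormLE F M) (hpos : ∀ x, 0 ≤ F x) (a b : E2) :
    F b ≤ F a + 2 * Real.sqrt ((M * (|b 0 - a 0| + |b 1 - a 1|) ^ 2) * F a)
      + M * (|b 0 - a 0| + |b 1 - a 1|) ^ 2 := by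
  set u : E2 := b - a with hu
  have hui : ∀ i, u i = b i - a i := fun i => rfl
  set K : ℝ := M * (|u 0| + |u 1|) ^ 2 with hK
  have hdiff : Differentiable ℝ F := hF.differentiable (by norm_num)
  have hΦ : ContDiff ℝ 1 (fderiv ℝ F) := hF.fderiv_right (le_refl 2)
  have hΦdiff : Differentiable ℝ (fderiv ℝ F) := hΦ.differentiable one_ne_zero
  set γ : ℝ → E2 := fun s => a + s • u with hγdef
  have hγ : ∀ s : ℝ, HasDerivAt γ u s := fun s => by
    simpa [hγdef] using ((hasDerivAt_id s).smul_const u).const_add a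
  set g : ℝ → ℝ := fun s => F (γ s) with hgdef
  set g1 : ℝ → ℝ := fun s => fderiv ℝ F (γ s) u with hg1def
  set g2 : ℝ → ℝ := fun s => fderiv ℝ (fderiv ℝ F) (γ s) u u with hg2def
  have hg : ∀ s, HasDerivAt g (g1 s) s := fun s =>
    (hdiff (γ s)).hasFDerivAt.comp_hasDerivAt s (hγ s)
  have hg1 : ∀ s, HasDerivAt g1 (g2 s) s := fun s => by
    have h1 : HasDerivAt (fun s => fderiv ℝ F (γ s)) (fderiv ℝ (fderiv ℝ F) (γ s) u) s :=
      (hΦdiff (γ s)).hasFDerivAt.comp_hasDerivAt s (hγ s)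
    simpa using h1.clm_apply (hasDerivAt_const s u)
  have hg2K : ∀ s, |g2 s| ≤ K := by
    intro s
    set B := fderiv ℝ (fderiv ℝ F) (γ s) with hB
    have h00 : |B (EuclideanSpace.single 0 1) (EuclideanSpace.single 0 1)| ≤ M := by
      rw [← pd_pd hF 0 0 (γ s), ← Dmul20]
      exact Dmul_le hnorm (by decide) (γ s)
    have h01 : |B (EuclideanSpace.single 0 1) (EuclideanSpace.single 1 1)| ≤ M := by
      rw [← pd_pd hF 0 1 (γ s), ← Dmul11]
      exact Dmul_le hnorm (by decide) (γ s)
    have h11 : |B (EuclideanSpace.single 1 1) (EuclideanSpace.single 1 1)| ≤ M := by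
      rw [← pd_pd hF 1 1 (γ s), ← Dmul02]
      exact Dmul_le hnorm (by decide) (γ s)
    have hBsymm : B (EuclideanSpace.single 1 1) (EuclideanSpace.single 0 1)
        = B (EuclideanSpace.single 0 1) (EuclideanSpace.single 1 1) :=
      second_derivative_symmetric (fun y => (hdiff y).hasFDerivAt)
        ((hΦdiff (γ s)).hasFDerivAt) _ _
    have h10 : |B (EuclideanSpace.single 1 1) (EuclideanSpace.single 0 1)| ≤ M := by
      rw [hBsymm]; exact h01
    have hexp : B u u
        = u 0 * u 0 * B (EuclideanSpace.single 0 1) (EuclideanSpace.single 0 1)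
        + u 0 * u 1 * B (EuclideanSpace.single 0 1) (EuclideanSpace.single 1 1)
        + u 1 * u 0 * B (EuclideanSpace.single 1 1) (EuclideanSpace.single 0 1)
        + u 1 * u 1 * B (EuclideanSpace.single 1 1) (EuclideanSpace.single 1 1) := by
      conv_lhs => rw [vec_decomp u]
      simp only [map_add, map_smul, ContinuousLinearMap.add_apply,
        ContinuousLinearMap.coe_smul', Pi.smul_apply, smul_eq_mul]
      ring
    have tb : ∀ (x y c : ℝ), |c| ≤ M → |x * y * c| ≤ |x| * |y| * M := by
      intro x y c hc
      rw [abs_mul, abs_mul]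
      exact mul_le_mul_of_nonneg_left hc (by positivity)
    have habs : |B u u| ≤ |u 0| * |u 0| * M + |u 0| * |u 1| * M
        + |u 1| * |u 0| * M + |u 1| * |u 1| * M := by
      rw [hexp]
      refine (abs_add_le _ _).trans (add_le_add ((abs_add_le _ _).trans
        (add_le_add ((abs_add_le _ _).trans
          (add_le_add (tb _ _ _ h00) (tb _ _ _ h01))) (tb _ _ _ h10))) (tb _ _ _ h11))
    calc |g2 s| = |B u u| := rfl
      _ ≤ |u 0| * |u 0| * M + |u 0| * |u 1| * M + |u 1| * |u 0| * M + |u 1| * |u 1| * M := habs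
      _ = K := by rw [hK]; ring
  have hKnn : 0 ≤ K := by rw [hK]; positivity
  have hg0 : g 0 = F a := by simp [hgdef, hγdef]
  have hgb : g 1 = F b := by simp [hgdef, hγdef, hu]
  have htay : ∀ t, |g t - g 0 - t * g1 0| ≤ K * t ^ 2 := fun t => taylor_abs hg hg1 hg2K t
  have hquad : ∀ t : ℝ, 0 ≤ K * (t * t) + g1 0 * t + g 0 := by
    intro t
    have h1 := (abs_le.1 (htay t)).2
    have h2 := hpos (γ t)
    have h3 : 0 ≤ g t := h2
    nlinarith [h1, h3]
  have hdisc := discrim_le_zero hquad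
  rw [discrim] at hdisc
  have hFa : 0 ≤ F a := hpos a
  have hg1b : g1 0 ≤ 2 * Real.sqrt (K * F a) := by
    have h1 : (g1 0) ^ 2 ≤ 4 * (K * F a) := by rw [← hg0]; nlinarith [hdisc]
    calc g1 0 ≤ |g1 0| := le_abs_self _
      _ = Real.sqrt ((g1 0) ^ 2) := (Real.sqrt_sq_eq_abs _).symm
      _ ≤ Real.sqrt (4 * (K * F a)) := Real.sqrt_le_sqrt h1
      _ = 2 * Real.sqrt (K * F a) := by
          rw [show (4:ℝ) * (K * F a) = 2 ^ 2 * (K * F a) by ring,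
            Real.sqrt_mul (by positivity), Real.sqrt_sq (by norm_num)]
  have h1 := (abs_le.1 (htay 1)).2
  have hfinal : F b ≤ F a + 2 * Real.sqrt (K * F a) + K := by
    nlinarith [h1, hg1b, hg0, hgb]
  have hcoord : K = M * (|b 0 - a 0| + |b 1 - a 1|) ^ 2 := by
    rw [hK, hui 0, hui 1]
  rw [← hcoord]
  exact hfinal

/-- (Lemma 7.5 of [JL20].) Dichotomy for the local data: for each
`B̲ > 0` there is `B̄ > 0` such that either `f ≥ B̲Mδ_Q²` on all of `E ∩ 2Q`, or
`f ≤ B̄Mδ_Q²` on all of `E ∩ 2Q`. -/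
theorem local_data_dichotomy :
    ∀ (k₀ : ℕ) (C₀ : ℝ), 4 ≤ k₀ → 1000 ≤ C₀ →
      ∀ c₀ : ℝ, 0 < c₀ →
        ∀ Blo : ℝ, 0 < Blo →
          ∃ Bhi : ℝ, 0 < Bhi ∧
            ∀ E : Set E2, E.Finite →
              ∀ f : E2 → ℝ, (∀ x ∈ E, 0 ≤ f x) →
                ∀ M : ℝ, 0 ≤ M →
                  ∀ q ∈ LambdaSharp E k₀ C₀,
                    ∀ x ∈ dyadicSq q, (∀ y ∈ E, c₀ * dyadicLen q ≤ dist x y) →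
                      (GammaSharp E f x (4 * k₀) M).Nonempty →
                      (∀ z ∈ E ∩ dilate q 2, Blo * M * dyadicLen q ^ 2 ≤ f z) ∨
                      (∀ z ∈ E ∩ dilate q 2, f z ≤ Bhi * M * dyadicLen q ^ 2) := by
  intro k₀ C₀ hk₀ hC₀ c₀ hc₀ Blo hBlo
  refine ⟨Blo + 8 * Real.sqrt Blo + 16, by positivity, ?_⟩
  intro E hE f hf M hM q hq x hx hdist hΓ
  by_cases hA : ∀ z ∈ E ∩ dilate q 2, Blo * M * dyadicLen q ^ 2 ≤ f z
  · exact Or.inl hA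
  · right
    push_neg at hA
    obtain ⟨z₁, hz₁, hz₁lt⟩ := hA
    intro z hz
    obtain ⟨P, hP⟩ := hΓ
    have hsub : ({z, z₁} : Set E2) ⊆ E := by
      intro w hw
      rcases hw with rfl | hw
      · exact hz.1
      · rw [Set.mem_singleton_iff] at hw; subst hw; exact hz₁.1
    have hcard2 : ({z, z₁} : Set E2).ncard ≤ 2 := by
      simpa [Set.ncard_singleton] using Set.ncard_insert_le z {z₁}
    have hcard : ({z, z₁} : Set E2).ncard ≤ 4 * k₀ := by omega
    obtain ⟨F, hFc, hFpos, hFeq, hFnorm, -⟩ := hP {z, z₁} hsub hcard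
    have hFz : F z = f z := hFeq z (by simp)
    have hFz₁ : F z₁ = f z₁ := hFeq z₁ (by simp)
    have hkey := key_bound hFc hM hFnorm hFpos z₁ z
    set δ : ℝ := dyadicLen q with hδdef
    have hδ : 0 < δ := by
      rw [hδdef]; exact zpow_pos (by norm_num) _
    have hcoord : ∀ i : Fin 2, |z i - z₁ i| ≤ 2 * δ := by
      intro i
      have h1 := hz.2 i
      have h2 := hz₁.2 i
      rw [abs_le]
      constructor <;> nlinarith [h1.1, h1.2, h2.1, h2.2, hδ]
    have hKle : M * (|z 0 - z₁ 0| + |z 1 - z₁ 1|) ^ 2 ≤ 16 * (M * δ ^ 2) := by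
      have h0 := hcoord 0
      have h1 := hcoord 1
      have hsq : (|z 0 - z₁ 0| + |z 1 - z₁ 1|) ^ 2 ≤ (4 * δ) ^ 2 := by
        apply pow_le_pow_left₀ (by positivity) (by linarith)
      nlinarith [hsq, hM]
    have hfz₁ : 0 ≤ f z₁ := hf z₁ hz₁.1
    have hfz₁le : f z₁ ≤ Blo * (M * δ ^ 2) := by nlinarith [hz₁lt.le]
    have hKnn : 0 ≤ M * (|z 0 - z₁ 0| + |z 1 - z₁ 1|) ^ 2 := by positivity
    have hsqle : Real.sqrt (M * (|z 0 - z₁ 0| + |z 1 - z₁ 1|) ^ 2 * F z₁)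
        ≤ Real.sqrt (16 * (M * δ ^ 2) * (Blo * (M * δ ^ 2))) := by
      apply Real.sqrt_le_sqrt
      apply mul_le_mul hKle (by rw [hFz₁]; exact hfz₁le) (by rw [hFz₁]; exact hfz₁)
        (by positivity)
    have hsqval : Real.sqrt (16 * (M * δ ^ 2) * (Blo * (M * δ ^ 2)))
        = 4 * Real.sqrt Blo * (M * δ ^ 2) := by
      rw [show 16 * (M * δ ^ 2) * (Blo * (M * δ ^ 2)) = (4 * (M * δ ^ 2)) ^ 2 * Blo by ring,
        Real.sqrt_mul (by positivity), Real.sqrt_sq (by positivity)]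
      ring
    have hchain : f z ≤ Blo * (M * δ ^ 2) + 2 * (4 * Real.sqrt Blo * (M * δ ^ 2))
        + 16 * (M * δ ^ 2) := by
      rw [← hFz]
      calc F z ≤ F z₁ + 2 * Real.sqrt (M * (|z 0 - z₁ 0| + |z 1 - z₁ 1|) ^ 2 * F z₁)
            + M * (|z 0 - z₁ 0| + |z 1 - z₁ 1|) ^ 2 := hkey
        _ ≤ Blo * (M * δ ^ 2) + 2 * (4 * Real.sqrt Blo * (M * δ ^ 2)) + 16 * (M * δ ^ 2) := by
            have hsq2 := hsqle.trans_eq hsqval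
            rw [hFz₁] at hsq2
            rw [hFz₁]
            linarith [hfz₁le, hKle, hsq2]
    have hring : (Blo + 8 * Real.sqrt Blo + 16) * M * δ ^ 2
        = Blo * (M * δ ^ 2) + 2 * (4 * Real.sqrt Blo * (M * δ ^ 2)) + 16 * (M * δ ^ 2) := by
      ring
    rw [hring]
    exact hchain

end
end

section
/- Fix constants k₀ ≥ 4 and C₀ ≥ 1000 and let E ⊂ ℝ² be finite. There is a universal constant C such that the following holds. Let Q ∈ Λ₀ satisfy δ_Q < 1 and E ∩ 2Q = ∅ (i.e., Q ∈ Λ_empty), and let Q' ∈ Λ^♯ be any square containing some point of 2Q⁺ ∩ E (such Q' exists, since Q⁺ ∉ Λ₀ forces 2Q⁺ ∩ E ≠ ∅). Then: (A) 5Q ∩ Q' ≠ ∅; and (B) δ_{Q'} ≤ Cδ_Q, and consequently |x − x'| ≤ Cδ_Q for all x ∈ Q and x' ∈ Q'. -/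
open Set Real Pointwise

noncomputable section

lemma mem_sqC {c : E2} {d : ℝ} {x : E2} :
    x ∈ sqC c d ↔ ∀ i : Fin 2, c i - d / 2 ≤ x i ∧ x i < c i + d / 2 := Iff.rfl

lemma aux_center (k n : ℤ) :
    |(2:ℝ)^(k+1) * (((n.fdiv 2 : ℤ) : ℝ) + 1/2) - (2:ℝ)^k * ((n:ℝ) + 1/2)| ≤ (2:ℝ)^k / 2 := by
  have hp : (0:ℝ) < (2:ℝ)^k := by positivity
  have h2 : (2:ℝ)^(k+1) = 2 * 2^k := by
    rw [zpow_add_one₀ (two_ne_zero)]; ring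
  have hd : n.fdiv 2 = n / 2 := Int.fdiv_eq_ediv_of_nonneg n (by norm_num)
  have hcase : n = 2 * (n/2) ∨ n = 2 * (n/2) + 1 := by omega
  rw [h2, hd, abs_le]
  rcases hcase with h | h
  · have hc : (n:ℝ) = 2 * ((n/2 : ℤ) : ℝ) := by exact_mod_cast congrArg (Int.cast : ℤ → ℝ) h
    constructor <;> nlinarith
  · have hc : (n:ℝ) = 2 * ((n/2 : ℤ) : ℝ) + 1 := by exact_mod_cast congrArg (Int.cast : ℤ → ℝ) h
    constructor <;> nlinarith

lemma parent_center_near (q : ℤ × ℤ × ℤ) (i : Fin 2) :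
    |dyadicCenter (dyadicParent q) i - dyadicCenter q i| ≤ dyadicLen q / 2 := by
  fin_cases i
  · exact aux_center q.2.2 q.1
  · exact aux_center q.2.2 q.2.1

lemma parent_len (q : ℤ × ℤ × ℤ) : dyadicLen (dyadicParent q) = 2 * dyadicLen q := by
  show (2:ℝ)^(q.2.2+1) = 2 * (2:ℝ)^q.2.2
  rw [zpow_add_one₀ (two_ne_zero)]; ring

/-- (Lemma 7.10 / Lemma on `μ` of the paper.) If `Q ∈ Λ_empty` and
`Q' ∈ Λ^♯` contains a point of `2Q⁺ ∩ E`, then `5Q ∩ Q' ≠ ∅`, `δ_{Q'} ≤ Cδ_Q`, and all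
points of `Q` and `Q'` are within distance `Cδ_Q` of each other. -/
theorem empty_square_relay :
    ∀ (k₀ : ℕ) (C₀ : ℝ), 4 ≤ k₀ → 1000 ≤ C₀ →
      ∃ C : ℝ,
        ∀ E : Set E2, E.Finite →
          ∀ q ∈ Lambda0 E k₀ C₀, dyadicLen q < 1 → E ∩ dilate q 2 = ∅ →
            ∀ q' ∈ LambdaSharp E k₀ C₀,
              (E ∩ dilate (dyadicParent q) 2 ∩ dyadicSq q').Nonempty →
                (dilate q 5 ∩ dyadicSq q').Nonempty ∧
                dyadicLen q' ≤ C * dyadicLen q ∧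
                (∀ x ∈ dyadicSq q, ∀ x' ∈ dyadicSq q', dist x x' ≤ C * dyadicLen q) := by
  intro k₀ C₀ hk hC
  refine ⟨100, ?_⟩
  intro E hE q hq hlt hempty q' hq' hz
  obtain ⟨z, ⟨hzE, hzA⟩, hzB⟩ := hz
  obtain ⟨-, -, yh, hyh, hyhd⟩ := hq
  obtain ⟨⟨-, hall', -⟩, -⟩ := hq'
  set δ := dyadicLen q with hδdef
  set δ' := dyadicLen q' with hδ'def
  set c := dyadicCenter q
  set cp := dyadicCenter (dyadicParent q)
  set c' := dyadicCenter q'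
  have hδpos : (0:ℝ) < δ := by rw [hδdef]; unfold dyadicLen; positivity
  have hδ'pos : (0:ℝ) < δ' := by rw [hδ'def]; unfold dyadicLen; positivity
  have hC0 : (0:ℝ) < C₀ := by linarith
  have hcc : ∀ i : Fin 2, -(δ/2) ≤ cp i - c i ∧ cp i - c i ≤ δ/2 :=
    fun i => abs_le.mp (parent_center_near q i)
  have hzA' : ∀ i : Fin 2, cp i - 2*δ ≤ z i ∧ z i < cp i + 2*δ := by
    intro i
    have h := (mem_sqC.mp hzA) i
    rw [parent_len q] at h
    constructor <;> [linarith [h.1]; linarith [h.2]]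
  have hzB' : ∀ i : Fin 2, c' i - δ'/2 ≤ z i ∧ z i < c' i + δ'/2 := mem_sqC.mp hzB
  have hyh' : ∀ i : Fin 2, cp i - 2*δ ≤ yh i ∧ yh i < cp i + 2*δ := by
    intro i
    have h := (mem_sqC.mp hyh) i
    rw [parent_len q] at h
    constructor <;> [linarith [h.1]; linarith [h.2]]
  -- Part B (key bound): δ' ≤ 16 δ
  have hB : δ' ≤ 16 * δ := by
    by_contra hcon
    push_neg at hcon
    have hyh2 : yh ∈ dilate q' 2 := by
      rw [dilate, mem_sqC]
      intro i
      have h1 := hyh' i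
      have h2 := hzA' i
      have h3 := hzB' i
      constructor
      · linarith [h1.1, h2.2, h3.1]
      · linarith [h1.2, h2.1, h3.2]
    have hle := hall' yh hyh2
    have hmul : C₀ * (16 * δ) < C₀ * δ' := by
      exact mul_lt_mul_of_pos_left hcon hC0
    nlinarith [hyhd, hle, hδpos, hC0]
  refine ⟨⟨z, ?_, hzB⟩, by linarith, ?_⟩
  · rw [dilate, mem_sqC]
    intro i
    have h2 := hzA' i
    have h := hcc i
    constructor
    · linarith [h2.1, h.2]
    · linarith [h2.2, h.1]
  · intro x hx x' hx'
    have hx1 : ∀ i : Fin 2, c i - δ/2 ≤ x i ∧ x i < c i + δ/2 := mem_sqC.mp hx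
    have hx2 : ∀ i : Fin 2, c' i - δ'/2 ≤ x' i ∧ x' i < c' i + δ'/2 := mem_sqC.mp hx'
    have hb : ∀ i : Fin 2, -(19*δ) ≤ x i - x' i ∧ x i - x' i ≤ 19*δ := by
      intro i
      have h1 := hx1 i; have h2 := hx2 i; have h3 := hzA' i; have h4 := hzB' i
      have h5 := hcc i
      constructor
      · linarith [h1.1, h2.2, h3.2, h4.1, h5.2]
      · linarith [h1.2, h2.1, h3.1, h4.2, h5.1]
    rw [EuclideanSpace.dist_eq, Fin.sum_univ_two]
    have e0 : dist (x 0) (x' 0) ^ 2 ≤ (19*δ)^2 := by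
      rw [Real.dist_eq, sq_abs]
      exact sq_le_sq' (hb 0).1 (hb 0).2
    have e1 : dist (x 1) (x' 1) ^ 2 ≤ (19*δ)^2 := by
      rw [Real.dist_eq, sq_abs]
      exact sq_le_sq' (hb 1).1 (hb 1).2
    have hsum : dist (x 0) (x' 0) ^ 2 + dist (x 1) (x' 1) ^ 2 ≤ (100*δ)^2 := by
      nlinarith [hδpos]
    calc Real.sqrt (dist (x 0) (x' 0) ^ 2 + dist (x 1) (x' 1) ^ 2)
        ≤ Real.sqrt ((100*δ)^2) := Real.sqrt_le_sqrt hsum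
      _ = 100*δ := Real.sqrt_sq (by positivity)


end
end
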